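/- For every dimension d ≥ 1 there exists a constant C > 0 (depending only on d) such that for every real ε with 0 < ε ≤ 1/2, every point q in Euclidean space ℝ^d, and every finite family of closed balls closedBall(c i, r i) (indexed by a finite type L, with r i > 0) each of which contains q, there exists a subset L' ⊆ L with |L'| ≤ C · ε^{-d} · log(1/ε) such that for every i ∈ L there exists m ∈ L' with r m ≥ r i and closedBall(c i, r i) ⊆ closedBall(c m, (1+ε)·(r m)). -/

import Mathlib

open Real Finset

lemma abs_sub_lt_one_of_le_of_lt {u v : ℝ} {n : ℝ} (h1 : n ≤ u) (h2 : u < n + 1)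
    (h3 : n ≤ v) (h4 : v < n + 1) : |u - v| < 1 := by
  rw [abs_sub_lt_iff]; constructor <;> linarith

lemma coord_le_dist {d : ℕ} (x y : EuclideanSpace ℝ (Fin d)) (j : Fin d) :
    |x j - y j| ≤ dist x y := by
  rw [EuclideanSpace.dist_eq]
  have h1 : |x j - y j| = Real.sqrt (|x j - y j| ^ 2) := by
    rw [Real.sqrt_sq (abs_nonneg _)]
  rw [h1]
  apply Real.sqrt_le_sqrt
  calc |x j - y j| ^ 2 = dist (x j) (y j) ^ 2 := by rw [Real.dist_eq]
    _ ≤ ∑ i, dist (x i) (y i) ^ 2 :=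
      Finset.single_le_sum (f := fun i => dist (x i) (y i) ^ 2)
        (fun i _ => sq_nonneg _) (Finset.mem_univ j)

lemma dist_le_of_coords {d : ℕ} (x y : EuclideanSpace ℝ (Fin d)) (s : ℝ) (hs : 0 ≤ s)
    (h : ∀ j, |x j - y j| ≤ s) : dist x y ≤ Real.sqrt d * s := by
  rw [EuclideanSpace.dist_eq]
  have : ∑ i, dist (x i) (y i) ^ 2 ≤ (d : ℝ) * s ^ 2 := by
    calc ∑ i, dist (x i) (y i) ^ 2 ≤ ∑ _i : Fin d, s ^ 2 := by
          apply Finset.sum_le_sum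
          intro i _
          rw [Real.dist_eq]
          exact pow_le_pow_left₀ (abs_nonneg _) (h i) 2
      _ = (d : ℝ) * s ^ 2 := by simp [Finset.sum_const, Finset.card_univ, mul_comm]
  calc Real.sqrt (∑ i, dist (x i) (y i) ^ 2) ≤ Real.sqrt ((d : ℝ) * s ^ 2) :=
        Real.sqrt_le_sqrt this
    _ = Real.sqrt d * s := by
        rw [Real.sqrt_mul (Nat.cast_nonneg d), Real.sqrt_sq hs]

lemma floor_eq_close {a b h : ℝ} (hh : 0 < h) (he : ⌊a / h⌋ = ⌊b / h⌋) : |a - b| < h := by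
  have ha1 : (⌊a / h⌋ : ℝ) ≤ a / h := Int.floor_le _
  have ha2 : a / h < ⌊a / h⌋ + 1 := Int.lt_floor_add_one _
  have hb1 : (⌊b / h⌋ : ℝ) ≤ b / h := Int.floor_le _
  have hb2 : b / h < ⌊b / h⌋ + 1 := Int.lt_floor_add_one _
  rw [he] at ha1 ha2
  have key : |a / h - b / h| < 1 := abs_sub_lt_one_of_le_of_lt ha1 ha2 hb1 hb2
  have heq : a - b = (a / h - b / h) * h := by field_simp
  rw [heq, abs_mul, abs_of_pos hh]
  calc |a / h - b / h| * h < 1 * h := by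
        apply mul_lt_mul_of_pos_right key hh
    _ = h := one_mul h

lemma dyadic_class {R a : ℝ} (hR : 0 < R) (ha : 0 < a) (haR : a ≤ R) :
    R / 2 ^ (⌊Real.logb 2 (R / a)⌋₊ + 1) < a ∧ a ≤ R / 2 ^ ⌊Real.logb 2 (R / a)⌋₊ := by
  set x := Real.logb 2 (R / a) with hx
  have hRa : (1 : ℝ) ≤ R / a := (one_le_div ha).2 haR
  have hx0 : 0 ≤ x := Real.logb_nonneg one_lt_two hRa
  have hpow : (2 : ℝ) ^ x = R / a := Real.rpow_logb two_pos (by norm_num) (by positivity)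
  have h1 : (⌊x⌋₊ : ℝ) ≤ x := Nat.floor_le hx0
  have h2 : x < ⌊x⌋₊ + 1 := Nat.lt_floor_add_one x
  constructor
  · rw [div_lt_iff₀ (by positivity)]
    have : R / a < (2 : ℝ) ^ (⌊x⌋₊ + 1) := by
      rw [← hpow]
      calc (2:ℝ) ^ x < 2 ^ ((⌊x⌋₊ + 1 : ℕ) : ℝ) := by
            apply Real.rpow_lt_rpow_left_iff one_lt_two |>.2
            push_cast; exact h2
        _ = 2 ^ (⌊x⌋₊ + 1) := by rw [Real.rpow_natCast]
    calc R = (R / a) * a := by field_simp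
      _ < 2 ^ (⌊x⌋₊ + 1) * a := by nlinarith
      _ = a * 2 ^ (⌊x⌋₊ + 1) := mul_comm _ _
  · rw [le_div_iff₀ (by positivity)]
    have : (2 : ℝ) ^ (⌊x⌋₊ : ℕ) ≤ R / a := by
      rw [← hpow, ← Real.rpow_natCast]
      exact Real.rpow_le_rpow_left_iff one_lt_two |>.2 h1
    calc a * 2 ^ ⌊x⌋₊ ≤ a * (R / a) := by nlinarith
      _ = R := by field_simp

set_option maxHeartbeats 2000000

theorem euclidean_ball_family_selection (d : ℕ) (hd : 1 ≤ d) :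
    ∃ C : ℝ, 0 < C ∧
      ∀ (ε : ℝ), 0 < ε → ε ≤ 1/2 →
      ∀ (q : EuclideanSpace ℝ (Fin d)),
      ∀ (L : Type) [Fintype L],
      ∀ (c : L → EuclideanSpace ℝ (Fin d)) (r : L → ℝ),
      (∀ i, 0 < r i) →
      (∀ i, q ∈ Metric.closedBall (c i) (r i)) →
      ∃ L' : Finset L,
        (L'.card : ℝ) ≤ C * ε ^ (-(d : ℤ)) * Real.log (1/ε) ∧
        ∀ i : L, ∃ m ∈ L', r i ≤ r m ∧
          Metric.closedBall (c i) (r i) ⊆ Metric.closedBall (c m) ((1 + ε) * r m) := by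
  classical
  set sd : ℝ := Real.sqrt d with hsd
  have hsd1 : 1 ≤ sd := by
    rw [hsd, show (1:ℝ) = Real.sqrt 1 from (Real.sqrt_one).symm]
    exact Real.sqrt_le_sqrt (by exact_mod_cast hd)
  have hsd0 : 0 < sd := lt_of_lt_of_le one_pos hsd1
  refine ⟨10 * (7 * sd) ^ d, by positivity, ?_⟩
  intro ε hε hε2 q L _ c r hr hq
  -- basic log facts
  have hinv : (2:ℝ) ≤ 1/ε := by
    rw [le_div_iff₀ hε]; linarith
  have hG2 : Real.log 2 ≤ Real.log (1/ε) := Real.log_le_log two_pos hinv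
  have hl2 : (3/5 : ℝ) < Real.log 2 := by
    have := Real.log_two_gt_d9; linarith
  have hG : (3/5 : ℝ) ≤ Real.log (1/ε) := le_trans hl2.le hG2
  have hεd : (0:ℝ) < ε ^ d := pow_pos hε d
  have hzpow : ε ^ (-(d : ℤ)) = (ε ^ d)⁻¹ := by
    rw [zpow_neg, zpow_natCast]
  have hB1 : (1:ℝ) ≤ (7 * sd) ^ d * (ε ^ d)⁻¹ := by
    have h1 : (1:ℝ) ≤ (7 * sd) ^ d := one_le_pow₀ (by linarith)
    have h2 : ε ^ d ≤ 1 := pow_le_one₀ hε.le (by linarith)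
    have h3 : (1:ℝ) ≤ (ε ^ d)⁻¹ := (one_le_inv₀ hεd).2 h2
    calc (1:ℝ) = 1 * 1 := (one_mul 1).symm
      _ ≤ (7 * sd) ^ d * (ε ^ d)⁻¹ := mul_le_mul h1 h3 zero_le_one (by positivity)
  by_cases hL : Nonempty L
  swap
  · refine ⟨∅, ?_, fun i => absurd ⟨i⟩ hL⟩
    simp only [Finset.card_empty, Nat.cast_zero]
    rw [hzpow]
    positivity
  -- main case
  obtain ⟨i₀, -, hi₀⟩ := Finset.exists_max_image Finset.univ r ⟨Classical.arbitrary L, Finset.mem_univ _⟩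
  set R := r i₀ with hRdef
  have hR : 0 < R := hr i₀
  have hiR : ∀ i, r i ≤ R := fun i => hi₀ i (Finset.mem_univ i)
  have hqc : ∀ i, dist q (c i) ≤ r i := fun i => Metric.mem_closedBall.1 (hq i)
  set t : ℕ → ℝ := fun k => R / 2 ^ k with ht
  have htpos : ∀ k, 0 < t k := fun k => by positivity
  set mesh : ℕ → ℝ := fun k => ε * t k / (2 * sd) with hmesh
  have hmeshpos : ∀ k, 0 < mesh k := fun k => by
    have := htpos k; positivity
  set kIdx : L → ℕ := fun i => ⌊Real.logb 2 (R / r i)⌋₊ with hkIdx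
  have hclass : ∀ i, t (kIdx i) / 2 < r i ∧ r i ≤ t (kIdx i) := by
    intro i
    have := dyadic_class hR (hr i) (hiR i)
    constructor
    · have h := this.1
      rw [pow_succ] at h
      calc t (kIdx i) / 2 = R / 2 ^ (kIdx i) / 2 := rfl
        _ = R / (2 ^ (kIdx i) * 2) := by ring
        _ < r i := h
    · exact this.2
  set cell : L → Fin d → ℤ := fun i j => ⌊(c i j - q j) / mesh (kIdx i)⌋ with hcell
  set key : L → ℕ × (Fin d → ℤ) := fun i => (kIdx i, cell i) with hkey
  set big : Finset L := Finset.univ.filter (fun i => ε * R / 2 < r i) with hbigdef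
  set best : (ℕ × (Fin d → ℤ)) → Finset L := fun p =>
    if h : (big.filter (fun j => key j = p)).Nonempty then
      {(Finset.exists_max_image (big.filter (fun j => key j = p)) r h).choose} else ∅
    with hbest
  set L' : Finset L := insert i₀ ((big.image key).biUnion best) with hL'
  set K : ℕ := ⌊Real.logb 2 (2/ε)⌋₊ + 1 with hK
  set M : ℤ := ⌈2 * sd / ε⌉ with hM
  have hMpos : 0 < M := by
    rw [hM]
    exact Int.ceil_pos.2 (by positivity)
  -- cell bounds
  have hcoordbound : ∀ i j, |c i j - q j| ≤ t (kIdx i) := by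
    intro i j
    calc |c i j - q j| ≤ dist (c i) q := coord_le_dist _ _ j
      _ = dist q (c i) := dist_comm _ _
      _ ≤ r i := hqc i
      _ ≤ t (kIdx i) := (hclass i).2
  have hcellbound : ∀ i j, -M ≤ cell i j ∧ cell i j ≤ M := by
    intro i j
    have hb := hcoordbound i j
    have hmp := hmeshpos (kIdx i)
    have hub : (c i j - q j) / mesh (kIdx i) ≤ 2 * sd / ε := by
      rw [div_le_iff₀ hmp]
      have h1 : c i j - q j ≤ t (kIdx i) := le_trans (le_abs_self _) hb
      have : 2 * sd / ε * mesh (kIdx i) = t (kIdx i) := by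
        rw [hmesh]; field_simp
      rw [this]; exact h1
    have hlb : -(2 * sd / ε) ≤ (c i j - q j) / mesh (kIdx i) := by
      rw [le_div_iff₀ hmp]
      have h1 : -(t (kIdx i)) ≤ c i j - q j := neg_le_of_abs_le hb
      have : -(2 * sd / ε) * mesh (kIdx i) = -(t (kIdx i)) := by
        rw [hmesh]; field_simp
      rw [this]; exact h1
    constructor
    · calc -M = -⌈2 * sd / ε⌉ := rfl
        _ = ⌊-(2 * sd / ε)⌋ := (Int.floor_neg).symm
        _ ≤ cell i j := Int.floor_mono hlb
    · calc cell i j ≤ ⌊2 * sd / ε⌋ := Int.floor_mono hub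
        _ ≤ ⌈2 * sd / ε⌉ := Int.floor_le_ceil _
  -- kIdx bound on big
  have hkIdxbound : ∀ i ∈ big, kIdx i < K := by
    intro i hi
    rw [hbigdef, Finset.mem_filter] at hi
    have hri : ε * R / 2 < r i := hi.2
    have hfrac : R / r i ≤ 2 / ε := by
      rw [div_le_div_iff₀ (hr i) hε]
      nlinarith [hr i]
    have : Real.logb 2 (R / r i) ≤ Real.logb 2 (2 / ε) :=
      Real.logb_le_logb_of_le one_lt_two (div_pos hR (hr i)) hfrac
    have : kIdx i ≤ ⌊Real.logb 2 (2/ε)⌋₊ := Nat.floor_mono this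
    omega
  -- coverage
  have hcover : ∀ i : L, ∃ m ∈ L', r i ≤ r m ∧
      Metric.closedBall (c i) (r i) ⊆ Metric.closedBall (c m) ((1 + ε) * r m) := by
    intro i
    by_cases hbig : ε * R / 2 < r i
    · -- big ball: use best of its cell
      have himem : i ∈ big.filter (fun j => key j = key i) := by
        rw [Finset.mem_filter, hbigdef, Finset.mem_filter]
        exact ⟨⟨Finset.mem_univ i, hbig⟩, rfl⟩
      have hne : (big.filter (fun j => key j = key i)).Nonempty := ⟨i, himem⟩
      obtain ⟨hm_mem, hm_max⟩ :=
        (Finset.exists_max_image (big.filter (fun j => key j = key i)) r hne).choose_spec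
      set m := (Finset.exists_max_image (big.filter (fun j => key j = key i)) r hne).choose
        with hm
      have hbestm : m ∈ best (key i) := by
        simp only [hbest, dif_pos hne]
        exact Finset.mem_singleton_self _
      have hmL' : m ∈ L' := by
        rw [hL']
        apply Finset.mem_insert_of_mem
        apply Finset.mem_biUnion.2
        refine ⟨key i, ?_, hbestm⟩
        apply Finset.mem_image_of_mem
        rw [hbigdef, Finset.mem_filter]
        exact ⟨Finset.mem_univ i, hbig⟩
      have hrim : r i ≤ r m := hm_max i himem
      have hkeyeq : key m = key i := (Finset.mem_filter.1 hm_mem).2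
      have hkeq : kIdx m = kIdx i := congrArg Prod.fst hkeyeq
      have hceq : cell m = cell i := congrArg Prod.snd hkeyeq
      refine ⟨m, hmL', hrim, ?_⟩
      apply Metric.closedBall_subset_closedBall'
      -- distance bound
      have hdist : dist (c i) (c m) ≤ sd * mesh (kIdx i) := by
        apply dist_le_of_coords _ _ _ (hmeshpos (kIdx i)).le
        intro j
        have hfe : ⌊(c i j - q j) / mesh (kIdx i)⌋ = ⌊(c m j - q j) / mesh (kIdx i)⌋ := by
          have h1 : cell i j = cell m j := by rw [hceq]
          rw [hcell] at h1
          simp only at h1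
          rw [h1, hkeq]
        have := floor_eq_close (hmeshpos (kIdx i)) hfe
        have habs : |(c i j - q j) - (c m j - q j)| < mesh (kIdx i) := this
        have : c i j - q j - (c m j - q j) = c i j - c m j := by ring
        rw [this] at habs
        exact habs.le
      have hmesheq : sd * mesh (kIdx i) = ε * t (kIdx i) / 2 := by
        rw [hmesh]; field_simp
      have hrm : t (kIdx i) / 2 < r m := by
        have := (hclass m).1
        rw [hkeq] at this
        exact this
      calc r i + dist (c i) (c m) ≤ r m + ε * t (kIdx i) / 2 := by
            rw [← hmesheq]; exact add_le_add hrim hdist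
        _ ≤ r m + ε * r m := by nlinarith
        _ = (1 + ε) * r m := by ring
    · -- small ball: use i₀
      push_neg at hbig
      refine ⟨i₀, by rw [hL']; exact Finset.mem_insert_self _ _, hiR i, ?_⟩
      apply Metric.closedBall_subset_closedBall'
      have hd1 : dist (c i) (c i₀) ≤ r i + R := by
        calc dist (c i) (c i₀) ≤ dist (c i) q + dist q (c i₀) := dist_triangle _ _ _
          _ ≤ r i + R := by
            have h1 : dist (c i) q ≤ r i := by rw [dist_comm]; exact hqc i
            exact add_le_add h1 (hqc i₀)
      calc r i + dist (c i) (c i₀) ≤ r i + (r i + R) := by linarith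
        _ ≤ (1 + ε) * r i₀ := by
          have : 2 * r i ≤ ε * R := by linarith
          have hR' : r i₀ = R := rfl
          nlinarith
  refine ⟨L', ?_, hcover⟩
  -- cardinality bound
  have hcard1 : L'.card ≤ 1 + (big.image key).card := by
    rw [hL']
    calc (insert i₀ ((big.image key).biUnion best)).card
        ≤ ((big.image key).biUnion best).card + 1 := Finset.card_insert_le _ _
      _ ≤ (∑ p ∈ big.image key, (best p).card) + 1 := by
          exact add_le_add_left (Finset.card_biUnion_le) 1
      _ ≤ (∑ _p ∈ big.image key, 1) + 1 := by
          apply add_le_add_left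
          apply Finset.sum_le_sum
          intro p _
          by_cases hp : (big.filter (fun j => key j = p)).Nonempty
          · simp only [hbest, dif_pos hp, Finset.card_singleton, le_refl]
          · simp only [hbest, dif_neg hp, Finset.card_empty, Nat.zero_le]
      _ = (big.image key).card + 1 := by rw [Finset.sum_const, smul_eq_mul, mul_one]
      _ = 1 + (big.image key).card := by omega
  have hsubset : big.image key ⊆
      (Finset.range K) ×ˢ (Finset.Icc (fun _ : Fin d => -M) (fun _ => M)) := by
    intro p hp
    obtain ⟨i, hi, hpi⟩ := Finset.mem_image.1 hp
    rw [Finset.mem_product]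
    constructor
    · rw [← hpi]
      exact Finset.mem_range.2 (hkIdxbound i hi)
    · rw [← hpi]
      rw [Finset.mem_Icc]
      constructor
      · intro j; exact (hcellbound i j).1
      · intro j; exact (hcellbound i j).2
  have hcard2 : (big.image key).card ≤ K * ((2 * M + 1).toNat) ^ d := by
    calc (big.image key).card
        ≤ ((Finset.range K) ×ˢ (Finset.Icc (fun _ : Fin d => -M) (fun _ => M))).card :=
          Finset.card_le_card hsubset
      _ = K * (Finset.Icc (fun _ : Fin d => -M) (fun _ => M)).card := by
          rw [Finset.card_product, Finset.card_range]
      _ = K * ((2 * M + 1).toNat) ^ d := by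
          rw [Pi.card_Icc]
          congr 1
          rw [Finset.prod_const, Finset.card_univ, Fintype.card_fin]
          congr 1
          rw [Int.card_Icc]
          congr 1
          ring
  -- now the real-number estimate
  have hKreal : (K : ℝ) ≤ 5 * Real.log (1/ε) := by
    have h1 : ((⌊Real.logb 2 (2/ε)⌋₊ : ℕ) : ℝ) ≤ Real.logb 2 (2/ε) :=
      Nat.floor_le (Real.logb_nonneg one_lt_two (by rw [le_div_iff₀ hε]; linarith))
    have h2 : Real.logb 2 (2/ε) = 1 + Real.log (1/ε) / Real.log 2 := by
      have hlog2ne : Real.log 2 ≠ 0 := by linarith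
      rw [Real.logb, show (2:ℝ)/ε = 2 * (1/ε) by ring, Real.log_mul (by norm_num)
        (by positivity)]
      field_simp
    have h3 : Real.log (1/ε) / Real.log 2 ≤ Real.log (1/ε) / (3/5) := by
      apply div_le_div_of_nonneg_left (by linarith) (by norm_num) hl2.le
    have hKle : (K : ℝ) ≤ Real.logb 2 (2/ε) + 1 := by
      rw [hK]; push_cast; linarith
    rw [h2] at hKle
    have : Real.log (1/ε) / (3/5) = (5/3) * Real.log (1/ε) := by ring
    nlinarith
  have hMreal : ((2 * M + 1).toNat : ℝ) ≤ 7 * sd / ε := by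
    have h1 : (M : ℝ) ≤ 2 * sd / ε + 1 := by
      rw [hM]
      have h2 : (⌈2 * sd / ε⌉ : ℝ) ≤ (⌊2 * sd / ε⌋ : ℝ) + 1 := by
        exact_mod_cast Int.ceil_le_floor_add_one _
      have h3 := Int.floor_le (2 * sd / ε)
      linarith
    have h0 : (0:ℤ) ≤ 2 * M + 1 := by omega
    have h4 : ((2 * M + 1).toNat : ℝ) = ((2 * M + 1 : ℤ) : ℝ) := by
      exact_mod_cast Int.toNat_of_nonneg h0
    rw [h4]
    push_cast
    have hsdε : ε ≤ sd := le_trans (by linarith) hsd1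
    have h5 : (3:ℝ) ≤ 3 * sd / ε := by
      rw [le_div_iff₀ hε]; linarith
    have h6 : 2 * (2 * sd / ε + 1) + 1 ≤ 7 * sd / ε := by
      have e1 : 3 * sd / ε = 3 * (sd / ε) := by ring
      have e2 : 2 * (2 * sd / ε + 1) + 1 = 4 * (sd / ε) + 3 := by ring
      have e3 : 7 * sd / ε = 7 * (sd / ε) := by ring
      rw [e2, e3]; rw [e1] at h5; linarith
    linarith
  have hT : ((2 * M + 1).toNat : ℝ) ^ d ≤ (7 * sd) ^ d * (ε ^ d)⁻¹ := by
    calc ((2 * M + 1).toNat : ℝ) ^ d ≤ (7 * sd / ε) ^ d :=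
          pow_le_pow_left₀ (Nat.cast_nonneg _) hMreal d
      _ = (7 * sd) ^ d * (ε ^ d)⁻¹ := by rw [div_pow, div_eq_mul_inv]
  have hcardℕ : L'.card ≤ 1 + K * ((2 * M + 1).toNat) ^ d := by
    calc L'.card ≤ 1 + (big.image key).card := hcard1
      _ ≤ 1 + K * ((2 * M + 1).toNat) ^ d := by omega
  have hcardR : (L'.card : ℝ) ≤ 1 + (K : ℝ) * ((2 * M + 1).toNat : ℝ) ^ d := by
    exact_mod_cast hcardℕ
  have hTnn : (0:ℝ) ≤ ((2 * M + 1).toNat : ℝ) ^ d := by positivity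
  have hGnn : (0:ℝ) ≤ Real.log (1/ε) := le_trans (by norm_num) hG
  have hKT : (K : ℝ) * ((2 * M + 1).toNat : ℝ) ^ d
      ≤ (5 * Real.log (1/ε)) * ((7 * sd) ^ d * (ε ^ d)⁻¹) := by
    apply mul_le_mul hKreal hT hTnn
    linarith
  have hGB : (3/5 : ℝ) ≤ Real.log (1/ε) * ((7 * sd) ^ d * (ε ^ d)⁻¹) := by
    have h0G : (0:ℝ) ≤ 3/5 := by norm_num
    have := mul_le_mul hG hB1 zero_le_one hGnn
    linarith
  rw [hzpow]
  nlinarith [hcardR, hKT, hGB]
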